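/- Let Δ denote the dyadic intervals of [0,1), let J ∈ Δ, 0 < ε < 1, and let G ⊂ closure(J) be a finite union of closed dyadic intervals with 0 < |G| < (1−ε)|J|. Let ℐ be the family of maximal dyadic subintervals I of J with |I ∩ G| ≥ (1−ε)|I|, let ℐ* be the maximal elements among the dyadic parents {I¹ : I ∈ ℐ}, and set G* = ⋃_{I∈ℐ*} closure(I). Then G ⊂ G* ⊂ closure(J) and |G*| ≥ (1+ε)|G|. -/

import Mathlib

open MeasureTheory Set
open scoped ENNReal

noncomputable section

/-- `S` is a (half-open) dyadic interval of `[0,1)`. -/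
def IsDyadic (S : Set ℝ) : Prop :=
  ∃ n k : ℕ, k < 2 ^ n ∧ S = Set.Ico ((k : ℝ) / 2 ^ n) ((k + 1 : ℝ) / 2 ^ n)

/-- `P` is the dyadic parent of the dyadic interval `I` : a dyadic interval containing `I`
of twice its length. -/
def DParent (P I : Set ℝ) : Prop :=
  IsDyadic P ∧ IsDyadic I ∧ I ⊆ P ∧ volume P = 2 * volume I

/-- The family `ℐ` of maximal dyadic subintervals `I ⊆ J` with `|I ∩ G| ≥ (1-ε)|I|`. -/
def maxFam (ε : ℝ) (J G : Set ℝ) : Set (Set ℝ) :=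
  {I | IsDyadic I ∧ I ⊆ J ∧ ENNReal.ofReal (1 - ε) * volume I ≤ volume (I ∩ G) ∧
    ∀ I', IsDyadic I' → I' ⊆ J →
      ENNReal.ofReal (1 - ε) * volume I' ≤ volume (I' ∩ G) → I ⊆ I' → I' = I}

/-- The family `{I¹ : I ∈ ℐ}` of dyadic parents of elements of `ℐ`. -/
def parFam (ε : ℝ) (J G : Set ℝ) : Set (Set ℝ) :=
  {P | ∃ I ∈ maxFam ε J G, DParent P I}

/-- The family `ℐ*` of maximal elements of `{I¹ : I ∈ ℐ}`. -/
def starFam (ε : ℝ) (J G : Set ℝ) : Set (Set ℝ) :=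
  {P ∈ parFam ε J G | ∀ P' ∈ parFam ε J G, P ⊆ P' → P' = P}

/-- `G* = ⋃_{I ∈ ℐ*} closure I`. -/
def Gstar (ε : ℝ) (J G : Set ℝ) : Set ℝ :=
  ⋃ P ∈ starFam ε J G, closure P

def D (n k : ℕ) : Set ℝ := Set.Ico ((k : ℝ) / 2 ^ n) ((k + 1 : ℝ) / 2 ^ n)

lemma D_lt (n k : ℕ) : ((k : ℝ) / 2 ^ n) < ((k + 1 : ℝ) / 2 ^ n) := by
  have h : (0:ℝ) < 2 ^ n := by positivity
  rw [div_lt_div_iff₀ h h]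
  nlinarith

lemma D_nonempty (n k : ℕ) : (D n k).Nonempty :=
  ⟨(k : ℝ) / 2 ^ n, le_refl _, D_lt n k⟩

lemma volume_D (n k : ℕ) : volume (D n k) = ENNReal.ofReal (1 / 2 ^ n) := by
  rw [D, Real.volume_Ico]
  congr 1
  field_simp
  ring

lemma volume_D_pos (n k : ℕ) : 0 < volume (D n k) := by
  rw [volume_D]; exact ENNReal.ofReal_pos.mpr (by positivity)

lemma volume_D_ne_top (n k : ℕ) : volume (D n k) ≠ ⊤ := by
  rw [volume_D]; exact ENNReal.ofReal_ne_top

lemma volume_D_le_iff {n m k l : ℕ} :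
    volume (D n k) ≤ volume (D m l) ↔ m ≤ n := by
  rw [volume_D, volume_D, ENNReal.ofReal_le_ofReal_iff (by positivity)]
  rw [div_le_div_iff₀ (by positivity) (by positivity), one_mul, one_mul]
  constructor
  · intro h
    have : (2:ℕ) ^ m ≤ 2 ^ n := by exact_mod_cast h
    exact (Nat.pow_le_pow_iff_right (by norm_num)).mp this
  · intro h
    exact_mod_cast Nat.pow_le_pow_right (by norm_num) h

lemma D_subset_D {n m k l : ℕ} (h : m ≤ n) (h1 : l * 2 ^ (n - m) ≤ k)
    (h2 : k < (l + 1) * 2 ^ (n - m)) : D n k ⊆ D m l := by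
  obtain ⟨d, rfl⟩ := Nat.exists_eq_add_of_le h
  simp only [Nat.add_sub_cancel_left] at h1 h2
  have e1 : (l * 2 ^ (m + d) : ℕ) ≤ k * 2 ^ m := by
    rw [pow_add]
    calc l * (2 ^ m * 2 ^ d) = l * 2 ^ d * 2 ^ m := by ring
    _ ≤ k * 2 ^ m := Nat.mul_le_mul_right _ h1
  have e2 : ((k + 1) * 2 ^ m : ℕ) ≤ (l + 1) * 2 ^ (m + d) := by
    rw [pow_add]
    calc (k + 1) * 2 ^ m ≤ (l + 1) * 2 ^ d * 2 ^ m := Nat.mul_le_mul_right _ (by omega)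
    _ = (l + 1) * (2 ^ m * 2 ^ d) := by ring
  apply Set.Ico_subset_Ico
  · rw [div_le_div_iff₀ (by positivity) (by positivity)]
    exact_mod_cast e1
  · rw [div_le_div_iff₀ (by positivity) (by positivity)]
    push_cast
    exact_mod_cast e2

lemma D_subset_of_inter {n m k l : ℕ} (h : m ≤ n)
    (hne : (D n k ∩ D m l).Nonempty) : D n k ⊆ D m l := by
  obtain ⟨x, ⟨hx1, hx2⟩, ⟨hy1, hy2⟩⟩ := hne
  have h1 : (k : ℝ) / 2 ^ n < ((l : ℝ) + 1) / 2 ^ m := lt_of_le_of_lt hx1 hy2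
  have h2 : (l : ℝ) / 2 ^ m < ((k : ℝ) + 1) / 2 ^ n := lt_of_le_of_lt hy1 hx2
  obtain ⟨d, rfl⟩ := Nat.exists_eq_add_of_le h
  rw [div_lt_div_iff₀ (by positivity) (by positivity)] at h1 h2
  have e1 : (k : ℝ) * 2 ^ m < ((l + 1) * 2 ^ (m + d) : ℕ) * 1 := by push_cast; nlinarith
  have e2 : ((l * 2 ^ (m + d) : ℕ) : ℝ) * 1 < ((k : ℝ) + 1) * 2 ^ m := by push_cast; nlinarith
  have n1 : k * 2 ^ m < (l + 1) * 2 ^ (m + d) := by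
    have : k * 2 ^ m < (l + 1) * 2 ^ (m + d) * 1 := by exact_mod_cast e1
    omega
  have n2 : l * 2 ^ (m + d) < (k + 1) * 2 ^ m := by
    have : ((l * 2 ^ (m + d) : ℕ) : ℝ) < (((k + 1) * 2 ^ m : ℕ) : ℝ) := by push_cast; nlinarith
    exact_mod_cast this
  apply D_subset_D h
  · simp only [Nat.add_sub_cancel_left]
    rw [pow_add] at n2
    have : l * 2 ^ d * 2 ^ m < (k + 1) * 2 ^ m := by
      calc l * 2 ^ d * 2 ^ m = l * (2 ^ m * 2 ^ d) := by ring
      _ < (k + 1) * 2 ^ m := n2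
    have := Nat.lt_of_mul_lt_mul_right this
    omega
  · simp only [Nat.add_sub_cancel_left]
    rw [pow_add] at n1
    have : k * 2 ^ m < (l + 1) * 2 ^ d * 2 ^ m := by
      calc k * 2 ^ m < (l + 1) * (2 ^ m * 2 ^ d) := n1
      _ = (l + 1) * 2 ^ d * 2 ^ m := by ring
    exact Nat.lt_of_mul_lt_mul_right this

lemma IsDyadic.nest {I I' : Set ℝ} (h : IsDyadic I) (h' : IsDyadic I')
    (hne : (I ∩ I').Nonempty) : I ⊆ I' ∨ I' ⊆ I := by
  obtain ⟨n, k, -, rfl⟩ := h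
  obtain ⟨m, l, -, rfl⟩ := h'
  rcases le_total m n with hmn | hnm
  · exact Or.inl (D_subset_of_inter hmn hne)
  · exact Or.inr (D_subset_of_inter hnm (by rwa [Set.inter_comm] at hne))

lemma IsDyadic.nonempty {I : Set ℝ} (h : IsDyadic I) : I.Nonempty := by
  obtain ⟨n, k, -, rfl⟩ := h; exact D_nonempty n k

lemma IsDyadic.volume_pos {I : Set ℝ} (h : IsDyadic I) : 0 < volume I := by
  obtain ⟨n, k, -, rfl⟩ := h; exact volume_D_pos n k

lemma IsDyadic.volume_ne_top {I : Set ℝ} (h : IsDyadic I) : volume I ≠ ⊤ := by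
  obtain ⟨n, k, -, rfl⟩ := h; exact volume_D_ne_top n k

lemma D_eq_of_subset {n k l : ℕ} (h : D n k ⊆ D n l) : k = l := by
  have := h ⟨le_refl _, D_lt n k⟩
  obtain ⟨h1, h2⟩ := this
  have hp : (0:ℝ) < 2 ^ n := by positivity
  rw [div_le_div_iff₀ hp hp] at h1
  rw [div_lt_div_iff₀ hp hp] at h2
  have c1 : (l:ℝ) ≤ k := by nlinarith
  have c2 : (k:ℝ) < (l:ℝ) + 1 := by nlinarith
  have d1 : l ≤ k := by exact_mod_cast c1
  have d2 : (k:ℝ) < ((l + 1 : ℕ) : ℝ) := by push_cast; linarith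
  have d3 : k < l + 1 := by exact_mod_cast d2
  omega

lemma IsDyadic.eq_of_subset_of_volume_le {I I' : Set ℝ} (h : IsDyadic I) (h' : IsDyadic I')
    (hsub : I ⊆ I') (hvol : volume I' ≤ volume I) : I = I' := by
  obtain ⟨n, k, -, rfl⟩ := h
  obtain ⟨m, l, -, rfl⟩ := h'
  have h1 : m ≤ n := volume_D_le_iff.mp (measure_mono hsub)
  have h2 : n ≤ m := volume_D_le_iff.mp hvol
  obtain rfl : n = m := le_antisymm h2 h1
  rw [D_eq_of_subset hsub]

lemma IsDyadic.volume_lt_of_ssubset {I I' : Set ℝ} (h : IsDyadic I) (h' : IsDyadic I')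
    (hsub : I ⊆ I') (hne : I ≠ I') : volume I < volume I' := by
  rcases lt_or_ge (volume I) (volume I') with hlt | hle
  · exact hlt
  · exact absurd (h.eq_of_subset_of_volume_le h' hsub hle) hne

/-- level of a dyadic interval from a volume inequality -/
lemma level_lt {n m k l : ℕ} (h : volume (D n k) < volume (D m l)) : m < n := by
  by_contra hc
  exact absurd (volume_D_le_iff.mpr (not_lt.mp hc)) (not_le.mpr h)

lemma parent_exists {I J : Set ℝ} (hI : IsDyadic I) (hJ : IsDyadic J)
    (hsub : I ⊆ J) (hne : I ≠ J) : ∃ P, DParent P I ∧ P ⊆ J := by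
  obtain ⟨n, k, hk, rfl⟩ := hI
  obtain ⟨m, l, hl, rfl⟩ := hJ
  have hmn : m ≤ n := volume_D_le_iff.mp (measure_mono hsub)
  have hmn' : m < n := by
    rcases eq_or_lt_of_le hmn with rfl | h
    · exact absurd (congrArg (D m) (D_eq_of_subset hsub)) hne
    · exact h
  obtain ⟨n', rfl⟩ : ∃ n', n = n' + 1 := ⟨n - 1, by omega⟩
  have hps : D (n' + 1) k ⊆ D n' (k / 2) := by
    have e : n' + 1 - n' = 1 := by omega
    apply D_subset_D (Nat.le_succ n') <;> rw [e, pow_one] <;> omega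
  refine ⟨D n' (k / 2), ⟨⟨n', k / 2, ?_, rfl⟩, ⟨n' + 1, k, hk, rfl⟩, hps, ?_⟩, ?_⟩
  · have : k < 2 ^ n' * 2 := by rw [pow_succ] at hk; omega
    omega
  · have hv := volume_D (n' + 1) k
    rw [D] at hv
    rw [volume_D, hv, ← ENNReal.ofReal_ofNat, ← ENNReal.ofReal_mul (by norm_num)]
    congr 1
    rw [pow_succ]
    field_simp
  · apply D_subset_of_inter (by omega)
    obtain ⟨x, hx⟩ := D_nonempty (n' + 1) k
    exact ⟨x, hps hx, hsub hx⟩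

lemma parent_unique {P P' I : Set ℝ} (h : DParent P I) (h' : DParent P' I) : P = P' := by
  obtain ⟨hP, hI, hIP, hv⟩ := h
  obtain ⟨hP', -, hIP', hv'⟩ := h'
  obtain ⟨x, hx⟩ := hI.nonempty
  rcases hP.nest hP' ⟨x, hIP hx, hIP' hx⟩ with hs | hs
  · exact hP.eq_of_subset_of_volume_le hP' hs (by rw [hv, hv'])
  · exact (hP'.eq_of_subset_of_volume_le hP hs (by rw [hv, hv'])).symm

lemma DParent.ne {P I : Set ℝ} (h : DParent P I) : P ≠ I := by
  obtain ⟨hP, hI, -, hv⟩ := h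
  intro heq
  rw [heq] at hv
  have h0 : 0 < (volume I).toReal := ENNReal.toReal_pos hI.volume_pos.ne' hI.volume_ne_top
  have h1 : (volume I).toReal = 2 * (volume I).toReal := by
    conv_lhs => rw [hv]
    rw [ENNReal.toReal_mul]
    norm_num
  linarith

lemma DParent.volume_lt {P I : Set ℝ} (h : DParent P I) : volume I < volume P :=
  h.2.1.volume_lt_of_ssubset h.1 h.2.2.1 (Ne.symm h.ne)

/-- generic existence of maximal dyadic elements above a given one -/
lemma exists_max {Q : Set ℝ → Prop} {J : Set ℝ} (hJ : IsDyadic J)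
    (hQ : ∀ I, Q I → IsDyadic I ∧ I ⊆ J) {I₀ : Set ℝ} (h0 : Q I₀) :
    ∃ I, Q I ∧ I₀ ⊆ I ∧ ∀ I', Q I' → I ⊆ I' → I' = I := by
  obtain ⟨m, l, -, hJeq⟩ := hJ
  obtain ⟨n, k, -, hI0⟩ := (hQ I₀ h0).1
  suffices H : ∀ n k, Q (D n k) → ∃ I, Q I ∧ D n k ⊆ I ∧ ∀ I', Q I' → I ⊆ I' → I' = I by
    subst hI0; exact H n k h0
  clear h0 hI0 I₀ k
  intro n
  induction n using Nat.strong_induction_on with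
  | _ n IH =>
    intro k hQk
    by_cases hmax : ∀ I', Q I' → D n k ⊆ I' → I' = D n k
    · exact ⟨D n k, hQk, subset_rfl, hmax⟩
    · push_neg at hmax
      obtain ⟨I', hQI', hsub, hne⟩ := hmax
      obtain ⟨n', k', -, rfl⟩ := (hQ I' hQI').1
      have hlt : n' < n := level_lt
        ((hQ _ hQk).1.volume_lt_of_ssubset (hQ _ hQI').1 hsub (Ne.symm hne))
      obtain ⟨I, hQI, hsub', hmax'⟩ := IH n' hlt k' hQI'
      exact ⟨I, hQI, hsub.trans hsub', hmax'⟩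


lemma IsDyadic.measurableSet {I : Set ℝ} (h : IsDyadic I) : MeasurableSet I := by
  obtain ⟨n, k, -, rfl⟩ := h; exact measurableSet_Ico

lemma countable_dyadic : {S : Set ℝ | IsDyadic S}.Countable := by
  have h : {S : Set ℝ | IsDyadic S} ⊆ Set.range (fun p : ℕ × ℕ => D p.1 p.2) := by
    rintro S ⟨n, k, -, rfl⟩; exact ⟨(n, k), rfl⟩
  exact (Set.countable_range _).mono h

lemma vol_inter_closure_le (G : Set ℝ) {I : Set ℝ} (h : IsDyadic I) :
    volume (G ∩ closure I) ≤ volume (G ∩ I) := by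
  obtain ⟨n, k, -, rfl⟩ := h
  have hcl : closure (D n k) = Icc ((k : ℝ) / 2 ^ n) ((k + 1 : ℝ) / 2 ^ n) :=
    closure_Ico (D_lt n k).ne
  calc volume (G ∩ closure (D n k))
      ≤ volume ((G ∩ D n k) ∪ {((k : ℝ) + 1) / 2 ^ n}) := by
        apply measure_mono
        rw [hcl]
        rintro x ⟨hxG, hx1, hx2⟩
        rcases lt_or_eq_of_le hx2 with hlt | heq
        · exact Or.inl ⟨hxG, hx1, hlt⟩
        · exact Or.inr heq
    _ ≤ volume (G ∩ D n k) + volume {((k : ℝ) + 1) / 2 ^ n} := measure_union_le _ _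
    _ = volume (G ∩ D n k) := by rw [Real.volume_singleton, add_zero]


/-- If `J` is dyadic, `G ⊆ closure J` is a finite union of closed dyadic intervals with
`0 < |G| < (1-ε)|J|`, then `G ⊆ G* ⊆ closure J` and `|G*| ≥ (1+ε)|G|`. -/
theorem stmt10 (J G : Set ℝ) (ε : ℝ) (hε : 0 < ε) (hε' : ε < 1)
    (hJ : IsDyadic J) (hGJ : G ⊆ closure J)
    (hGfin : ∃ S : Set (Set ℝ), S.Finite ∧ (∀ I ∈ S, IsDyadic I) ∧ G = ⋃ I ∈ S, closure I)
    (hGpos : 0 < volume G)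
    (hGsmall : volume G < ENNReal.ofReal (1 - ε) * volume J) :
    G ⊆ Gstar ε J G ∧ Gstar ε J G ⊆ closure J ∧
      ENNReal.ofReal (1 + ε) * volume G ≤ volume (Gstar ε J G) := by
  classical
  -- no maximal interval equals J
  have hne_J : ∀ I ∈ maxFam ε J G, I ≠ J := by
    rintro I ⟨-, -, hdens, -⟩ rfl
    exact absurd hGsmall (not_lt.mpr (hdens.trans (measure_mono Set.inter_subset_right)))
  -- every parent is dyadic and contained in J
  have hparsub : ∀ P ∈ parFam ε J G, IsDyadic P ∧ P ⊆ J := by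
    rintro P ⟨I, hImem, hPI⟩
    have hImem' := hImem
    obtain ⟨hIdy, hIJ, -, -⟩ := hImem'
    obtain ⟨P₀, hP₀, hP₀J⟩ := parent_exists hIdy hJ hIJ (hne_J I hImem)
    rw [parent_unique hPI hP₀]
    exact ⟨hP₀.1, hP₀J⟩
  -- every starFam element fails the density condition
  have hstar_fail : ∀ P ∈ starFam ε J G,
      volume (P ∩ G) ≤ ENNReal.ofReal (1 - ε) * volume P := by
    rintro P ⟨hPpar, -⟩
    obtain ⟨I, hImem, hPI⟩ := hPpar
    by_contra hc
    push_neg at hc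
    obtain ⟨hIdy, hIJ, hIdens, hImax⟩ := hImem
    have := hImax P hPI.1 (hparsub P ⟨I, ⟨hIdy, hIJ, hIdens, hImax⟩, hPI⟩).2 hc.le hPI.2.2.1
    exact hPI.ne this
  -- G ⊆ Gstar
  have hGsub : G ⊆ Gstar ε J G := by
    obtain ⟨S, hSfin, hSdy, hGeq⟩ := hGfin
    intro x hx
    rw [hGeq] at hx
    obtain ⟨I₀, hI₀S, hxcl⟩ := Set.mem_iUnion₂.mp hx
    have hclG : closure I₀ ⊆ G := by
      rw [hGeq]; exact Set.subset_biUnion_of_mem hI₀S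
    have hI₀dy := hSdy I₀ hI₀S
    have hNJI : ¬ J ⊆ I₀ := by
      intro hJI
      have c1 : volume J ≤ volume I₀ := measure_mono hJI
      have c2 : volume I₀ ≤ volume G := measure_mono (subset_closure.trans hclG)
      have c3 : ENNReal.ofReal (1 - ε) * volume J ≤ volume J := by
        calc ENNReal.ofReal (1 - ε) * volume J ≤ 1 * volume J :=
              mul_le_mul_left (ENNReal.ofReal_le_one.mpr (by linarith)) _
          _ = volume J := one_mul _
      exact absurd ((c1.trans c2).trans_lt (hGsmall.trans_le c3)) (lt_irrefl _)
    have hint : (I₀ ∩ J).Nonempty := by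
      obtain ⟨n, k, hk, hI₀eq⟩ := hI₀dy
      obtain ⟨m, l, hl, hJeq⟩ := hJ
      have hclcl : closure I₀ ⊆ closure J := hclG.trans hGJ
      rw [hI₀eq, hJeq, closure_Ico (D_lt n k).ne, closure_Ico (D_lt m l).ne] at hclcl
      have h1 : (l : ℝ) / 2 ^ m ≤ (k : ℝ) / 2 ^ n := (hclcl (Set.left_mem_Icc.mpr (D_lt n k).le)).1
      have h2 : ((k : ℝ) + 1) / 2 ^ n ≤ ((l : ℝ) + 1) / 2 ^ m :=
        (hclcl (Set.right_mem_Icc.mpr (D_lt n k).le)).2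
      refine ⟨(k : ℝ) / 2 ^ n, ?_, ?_⟩
      · rw [hI₀eq]; exact ⟨le_refl _, D_lt n k⟩
      · rw [hJeq]; exact ⟨h1, lt_of_lt_of_le (D_lt n k) h2⟩
    have hI₀J : I₀ ⊆ J := (hI₀dy.nest hJ hint).resolve_right hNJI
    have hI₀G : I₀ ⊆ G := subset_closure.trans hclG
    have hQ0 : IsDyadic I₀ ∧ I₀ ⊆ J ∧
        ENNReal.ofReal (1 - ε) * volume I₀ ≤ volume (I₀ ∩ G) := by
      refine ⟨hI₀dy, hI₀J, ?_⟩
      rw [Set.inter_eq_self_of_subset_left hI₀G]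
      calc ENNReal.ofReal (1 - ε) * volume I₀ ≤ 1 * volume I₀ :=
            mul_le_mul_left (ENNReal.ofReal_le_one.mpr (by linarith)) _
        _ = volume I₀ := one_mul _
    obtain ⟨I, hQI, hsub, hmaxI⟩ := exists_max
      (Q := fun I => IsDyadic I ∧ I ⊆ J ∧
        ENNReal.ofReal (1 - ε) * volume I ≤ volume (I ∩ G))
      hJ (fun I h => ⟨h.1, h.2.1⟩) hQ0
    have hImem : I ∈ maxFam ε J G :=
      ⟨hQI.1, hQI.2.1, hQI.2.2, fun I' a b c d => hmaxI I' ⟨a, b, c⟩ d⟩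
    obtain ⟨P, hPar, hPJ⟩ := parent_exists hQI.1 hJ hQI.2.1 (hne_J I hImem)
    have hPpar : P ∈ parFam ε J G := ⟨I, hImem, hPar⟩
    obtain ⟨Ps, hQPs, hsubP, hmaxP⟩ :=
      exists_max (Q := fun P => P ∈ parFam ε J G) hJ (fun P h => hparsub P h) hPpar
    have hPstar : Ps ∈ starFam ε J G := ⟨hQPs, fun P' h hs => hmaxP P' h hs⟩
    exact Set.mem_biUnion hPstar
      (closure_mono (hsub.trans (hPar.2.2.1.trans hsubP)) hxcl)
  -- Gstar ⊆ closure J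
  have hGstarJ : Gstar ε J G ⊆ closure J := by
    intro x hx
    obtain ⟨P, hP, hxP⟩ := Set.mem_iUnion₂.mp hx
    exact closure_mono (hparsub P hP.1).2 hxP
  -- volume estimate
  set s := starFam ε J G with hs
  have hcnt : s.Countable := countable_dyadic.mono (fun P hP => (hparsub P hP.1).1)
  have hdisj : s.PairwiseDisjoint id := by
    intro P hP P' hP' hne
    rw [Function.onFun, Set.disjoint_iff_inter_eq_empty]
    by_contra hc
    obtain ⟨x, hx⟩ := Set.nonempty_iff_ne_empty.mpr hc
    rcases (hparsub P hP.1).1.nest (hparsub P' hP'.1).1 ⟨x, hx⟩ with hss | hss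
    · exact hne (hP.2 P' hP'.1 hss).symm
    · exact hne (hP'.2 P hP.1 hss)
  have hmeas : ∀ P ∈ s, MeasurableSet P := fun P hP => (hparsub P hP.1).1.measurableSet
  have hUeq : volume (⋃ P ∈ s, P) = ∑' P : s, volume (P : Set ℝ) :=
    measure_biUnion hcnt hdisj hmeas
  have h1 : volume G ≤ ∑' P : s, volume (G ∩ closure (P : Set ℝ)) := by
    have hle : volume G ≤ volume (⋃ P ∈ s, G ∩ closure P) := by
      apply measure_mono
      intro x hx
      obtain ⟨P, hP, hxP⟩ := Set.mem_iUnion₂.mp (hGsub hx)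
      exact Set.mem_biUnion hP ⟨hx, hxP⟩
    exact hle.trans (measure_biUnion_le _ hcnt _)
  have h2 : ∀ P : s, volume (G ∩ closure (P : Set ℝ)) ≤
      ENNReal.ofReal (1 - ε) * volume (P : Set ℝ) := by
    rintro ⟨P, hP⟩
    calc volume (G ∩ closure P) ≤ volume (G ∩ P) := vol_inter_closure_le G (hparsub P hP.1).1
      _ = volume (P ∩ G) := by rw [Set.inter_comm]
      _ ≤ ENNReal.ofReal (1 - ε) * volume P := hstar_fail P hP
  have h3 : volume G ≤ ENNReal.ofReal (1 - ε) * volume (Gstar ε J G) := by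
    calc volume G ≤ ∑' P : s, volume (G ∩ closure (P : Set ℝ)) := h1
      _ ≤ ∑' P : s, ENNReal.ofReal (1 - ε) * volume (P : Set ℝ) := ENNReal.tsum_le_tsum h2
      _ = ENNReal.ofReal (1 - ε) * ∑' P : s, volume (P : Set ℝ) := ENNReal.tsum_mul_left
      _ = ENNReal.ofReal (1 - ε) * volume (⋃ P ∈ s, P) := by rw [hUeq]
      _ ≤ ENNReal.ofReal (1 - ε) * volume (Gstar ε J G) := by
          apply mul_le_mul_right
          apply measure_mono
          exact Set.iUnion₂_mono fun P hP => subset_closure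
  refine ⟨hGsub, hGstarJ, ?_⟩
  calc ENNReal.ofReal (1 + ε) * volume G
      ≤ ENNReal.ofReal (1 + ε) * (ENNReal.ofReal (1 - ε) * volume (Gstar ε J G)) :=
        mul_le_mul_right h3 _
    _ = ENNReal.ofReal ((1 + ε) * (1 - ε)) * volume (Gstar ε J G) := by
        rw [← mul_assoc, ← ENNReal.ofReal_mul (by linarith)]
    _ ≤ 1 * volume (Gstar ε J G) :=
        mul_le_mul_left (ENNReal.ofReal_le_one.mpr (by nlinarith)) _
    _ = volume (Gstar ε J G) := one_mul _
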